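/- For any linear code C with minimum weighted-Hamming distance d_λ(C) and error-correction capability t_λ(C), it holds that ⌊(d_λ(C)−1)/2⌋ ≤ t_λ(C) ≤ ⌊(d_λ(C)+λ_m)/2⌋ − 1, where λ_m is the largest scaling coefficient. -/

import Mathlib

variable {F : Type} [Field F] [Fintype F] [DecidableEq F]

/-- Weighted-Hamming weight of a block-partitioned vector. -/
def wL {m : ℕ} (n : Fin m → ℕ) (lam : Fin m → ℕ) (a : ∀ ℓ, Fin (n ℓ) → F) : ℕ :=
  ∑ ℓ, lam ℓ * hammingNorm (a ℓ)

/-- `τ_λ(c) + 1`: minimum over `r` of `max {w_λ(r), w_λ(c − r)}`. -/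
noncomputable def tauAux {m : ℕ} (n lam : Fin m → ℕ) (c : ∀ ℓ, Fin (n ℓ) → F) : ℕ :=
  sInf {x | ∃ r : ∀ ℓ, Fin (n ℓ) → F, x = max (wL n lam r) (wL n lam (c - r))}

/-- Error-correction radius `τ_λ(c)`. -/
noncomputable def tau {m : ℕ} (n lam : Fin m → ℕ) (c : ∀ ℓ, Fin (n ℓ) → F) : ℕ :=
  tauAux n lam c - 1

/-- Weighted-Hamming ball of radius `t`. -/
def ball {m : ℕ} (n lam : Fin m → ℕ) (t : ℕ) : Set (∀ ℓ, Fin (n ℓ) → F) :=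
  {x | wL n lam x ≤ t}

/-- Difference set of the weighted-Hamming ball of radius `t`. -/
def dball {m : ℕ} (n lam : Fin m → ℕ) (t : ℕ) : Set (∀ ℓ, Fin (n ℓ) → F) :=
  {z | ∃ x ∈ ball n lam t, ∃ y ∈ ball n lam t, z = x - y}

/-- Minimum weighted-Hamming distance of a linear code. -/
noncomputable def dL {m : ℕ} (n lam : Fin m → ℕ) (C : Submodule F (∀ ℓ, Fin (n ℓ) → F)) : ℕ :=
  sInf {x | ∃ c ∈ C, c ≠ 0 ∧ x = wL n lam c}

/-- Error-correction capability of a linear code. -/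
noncomputable def tL {m : ℕ} (n lam : Fin m → ℕ) (C : Submodule F (∀ ℓ, Fin (n ℓ) → F)) : ℕ :=
  sInf {x | ∃ c ∈ C, c ≠ 0 ∧ x = tau n lam c}

lemma wL_zero {m : ℕ} (n lam : Fin m → ℕ) : wL n lam (0 : ∀ ℓ, Fin (n ℓ) → F) = 0 := by
  simp [wL]

lemma hN_add_le {ι : Type} [Fintype ι] [DecidableEq ι] (x y : ι → F) :
    hammingNorm (x + y) ≤ hammingNorm x + hammingNorm y := by
  have h := hammingDist_triangle (x + y) y (0 : ι → F)
  rwa [hammingDist_zero_right, hammingDist_zero_right, hammingDist_eq_hammingNorm,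
    show -(x + y) + y = -x by abel,
    show hammingNorm (-x) = hammingNorm x by simp [hammingNorm]] at h

lemma wL_add_le {m : ℕ} (n lam : Fin m → ℕ) (x y : ∀ ℓ, Fin (n ℓ) → F) :
    wL n lam (x + y) ≤ wL n lam x + wL n lam y := by
  rw [wL, wL, wL, ← Finset.sum_add_distrib]
  refine Finset.sum_le_sum fun ℓ _ => ?_
  rw [← Nat.mul_add]
  exact Nat.mul_le_mul_left _ (hN_add_le (x ℓ) (y ℓ))

lemma wL_le_split {m : ℕ} (n lam : Fin m → ℕ) (c r : ∀ ℓ, Fin (n ℓ) → F) :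
    wL n lam c ≤ wL n lam r + wL n lam (c - r) := by
  have h := wL_add_le n lam r (c - r)
  rwa [add_sub_cancel] at h

lemma wL_pos {m : ℕ} (n lam : Fin m → ℕ) (hlam : ∀ ℓ, 1 ≤ lam ℓ)
    (c : ∀ ℓ, Fin (n ℓ) → F) (hc : c ≠ 0) : 1 ≤ wL n lam c := by
  obtain ⟨ℓ, hℓ⟩ : ∃ ℓ, c ℓ ≠ 0 := by
    by_contra h; push_neg at h; exact hc (funext h)
  have h1 : 1 ≤ lam ℓ * hammingNorm (c ℓ) :=
    Nat.one_le_iff_ne_zero.mpr (Nat.mul_ne_zero (by have := hlam ℓ; omega)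
      (hammingNorm_ne_zero_iff.mpr hℓ))
  calc (1 : ℕ) ≤ lam ℓ * hammingNorm (c ℓ) := h1
    _ ≤ wL n lam c := by
      rw [wL]
      exact Finset.single_le_sum (f := fun ℓ => lam ℓ * hammingNorm (c ℓ))
        (fun _ _ => Nat.zero_le _) (Finset.mem_univ ℓ)

lemma wL_update {m : ℕ} (n lam : Fin m → ℕ) (c : ∀ ℓ, Fin (n ℓ) → F) (ℓ : Fin m)
    (g : Fin (n ℓ) → F) :
    wL n lam (Function.update c ℓ g) + lam ℓ * hammingNorm (c ℓ)
      = wL n lam c + lam ℓ * hammingNorm g := by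
  rw [wL, wL]
  have hfun : (fun ℓ' => lam ℓ' * hammingNorm (Function.update c ℓ g ℓ'))
      = Function.update (fun ℓ' => lam ℓ' * hammingNorm (c ℓ')) ℓ (lam ℓ * hammingNorm g) :=
    funext fun ℓ' => Function.apply_update (fun a b => lam a * hammingNorm b) c ℓ g ℓ'
  calc (∑ ℓ', lam ℓ' * hammingNorm (Function.update c ℓ g ℓ')) + lam ℓ * hammingNorm (c ℓ)
      = (lam ℓ * hammingNorm g + ∑ ℓ' ∈ Finset.univ.erase ℓ, lam ℓ' * hammingNorm (c ℓ'))
          + lam ℓ * hammingNorm (c ℓ) := by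
        rw [hfun, Finset.sum_update_of_mem (Finset.mem_univ ℓ), Finset.sdiff_singleton_eq_erase]
    _ = (∑ ℓ', lam ℓ' * hammingNorm (c ℓ')) + lam ℓ * hammingNorm g := by
        rw [← Finset.add_sum_erase _ _ (Finset.mem_univ ℓ)]; ring

lemma hN_update_zero {ι : Type} [Fintype ι] [DecidableEq ι] (f : ι → F) (i : ι)
    (h : f i ≠ 0) : hammingNorm (Function.update f i 0) + 1 = hammingNorm f := by
  classical
  unfold hammingNorm
  have hset : ({j | Function.update f i 0 j ≠ 0} : Finset ι)
      = ({j | f j ≠ 0} : Finset ι).erase i := by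
    ext j
    by_cases hj : j = i
    · subst hj; simp
    · simp [Function.update_of_ne hj, hj]
  have hi : i ∈ ({j | f j ≠ 0} : Finset ι) := by simpa using h
  have hpos : 1 ≤ ({j | f j ≠ 0} : Finset ι).card := Finset.card_pos.mpr ⟨i, hi⟩
  rw [hset, Finset.card_erase_of_mem hi]
  omega

lemma hN_single_le {ι : Type} [Fintype ι] [DecidableEq ι] (f : ι → F) (i : ι)
    (h : ∀ j ≠ i, f j = 0) : hammingNorm f ≤ 1 := by
  classical
  unfold hammingNorm
  refine Finset.card_le_one.mpr fun a ha b hb => ?_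
  simp only [Finset.mem_filter, Finset.mem_univ, true_and] at ha hb
  by_cases hai : a = i
  · by_cases hbi : b = i
    · rw [hai, hbi]
    · exact absurd (h b hbi) hb
  · exact absurd (h a hai) ha

lemma wL_single_block {m : ℕ} (n lam : Fin m → ℕ) (e : ∀ ℓ, Fin (n ℓ) → F) (ℓ : Fin m)
    (he : ∀ ℓ' ≠ ℓ, e ℓ' = 0) : wL n lam e = lam ℓ * hammingNorm (e ℓ) := by
  rw [wL]
  exact Finset.sum_eq_single ℓ (fun b _ hb => by rw [he b hb, hammingNorm_zero, Nat.mul_zero])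
    (fun h => absurd (Finset.mem_univ ℓ) h)

lemma split_lemma {m : ℕ} (n lam : Fin m → ℕ) (L : ℕ) (hlam : ∀ ℓ, 1 ≤ lam ℓ)
    (hL : ∀ ℓ, lam ℓ ≤ L) (hL1 : 1 ≤ L) :
    ∀ N (c : ∀ ℓ, Fin (n ℓ) → F), wL n lam c ≤ N → ∀ t : ℕ,
      ∃ r, wL n lam r ≤ t ∧
        wL n lam (c - r) + min t (wL n lam c) ≤ wL n lam c + L - 1 := by
  intro N
  induction N with
  | zero =>
    intro c hc t
    refine ⟨0, by simp [wL_zero], ?_⟩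
    rw [sub_zero]
    omega
  | succ N ih =>
    intro c hc t
    by_cases hc0 : wL n lam c = 0
    · refine ⟨0, by simp [wL_zero], ?_⟩
      rw [sub_zero]; omega
    by_cases ht0 : t = 0
    · refine ⟨0, by simp [wL_zero], ?_⟩
      rw [sub_zero]; omega
    obtain ⟨ℓ, hℓ⟩ : ∃ ℓ, c ℓ ≠ 0 := by
      by_contra h; push_neg at h
      refine hc0 ?_
      rw [wL]
      refine Finset.sum_eq_zero fun ℓ _ => ?_
      rw [h ℓ, hammingNorm_zero, Nat.mul_zero]
    obtain ⟨i, hi⟩ : ∃ i, c ℓ i ≠ 0 := by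
      by_contra h; push_neg at h; exact hℓ (funext h)
    set c' : ∀ ℓ, Fin (n ℓ) → F := Function.update c ℓ (Function.update (c ℓ) i 0) with hc'def
    have hupd : hammingNorm (Function.update (c ℓ) i 0) + 1 = hammingNorm (c ℓ) :=
      hN_update_zero _ _ hi
    have hwc' : wL n lam c' + lam ℓ = wL n lam c := by
      have h3 := wL_update n lam c ℓ (Function.update (c ℓ) i 0)
      rw [← hc'def] at h3
      rw [← hupd, Nat.mul_add, Nat.mul_one, ← Nat.add_assoc] at h3
      omega
    have he_blocks : ∀ ℓ' ≠ ℓ, (c - c') ℓ' = 0 := by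
      intro ℓ' hne
      have : c' ℓ' = c ℓ' := Function.update_of_ne hne _ _
      simp [Pi.sub_apply, this]
    have he_single : ∀ j ≠ i, (c - c') ℓ j = 0 := by
      intro j hj
      have h1 : c' ℓ = Function.update (c ℓ) i 0 := Function.update_self _ _ _
      simp [Pi.sub_apply, h1, Function.update_of_ne hj]
    have hwe : wL n lam (c - c') ≤ lam ℓ := by
      rw [wL_single_block n lam (c - c') ℓ he_blocks]
      calc lam ℓ * hammingNorm ((c - c') ℓ) ≤ lam ℓ * 1 :=
            Nat.mul_le_mul_left _ (hN_single_le _ i he_single)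
        _ = lam ℓ := Nat.mul_one _
    have hlℓ := hlam ℓ
    have hLℓ := hL ℓ
    have hcN : wL n lam c' ≤ N := by omega
    by_cases hcase : lam ℓ ≤ t
    · obtain ⟨r', hr1, hr2⟩ := ih c' hcN (t - lam ℓ)
      refine ⟨r' + (c - c'), ?_, ?_⟩
      · calc wL n lam (r' + (c - c')) ≤ wL n lam r' + wL n lam (c - c') :=
              wL_add_le n lam _ _
          _ ≤ (t - lam ℓ) + lam ℓ := Nat.add_le_add hr1 hwe
          _ = t := by omega
      · have hsub : c - (r' + (c - c')) = c' - r' := by abel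
        rw [hsub]
        omega
    · refine ⟨0, by simp [wL_zero], ?_⟩
      rw [sub_zero]
      omega

/-- `⌊(d_λ(C)−1)/2⌋ ≤ t_λ(C) ≤ ⌊(d_λ(C)+λ_m)/2⌋ − 1`. -/
theorem tL_bounds_of_dL {m : ℕ} (hm : 0 < m) (n lam : Fin m → ℕ)
    (hmono : Monotone lam) (hlam : ∀ ℓ, 1 ≤ lam ℓ)
    (C : Submodule F (∀ ℓ, Fin (n ℓ) → F)) (hC : C ≠ ⊥) :
    (dL n lam C - 1) / 2 ≤ tL n lam C ∧
      tL n lam C ≤ (dL n lam C + lam ⟨m - 1, by omega⟩) / 2 - 1 := by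
  classical
  obtain ⟨x, hxC, hx0⟩ := (Submodule.ne_bot_iff C).mp hC
  set L : ℕ := lam ⟨m - 1, by omega⟩ with hLdef
  have hLmax : ∀ ℓ, lam ℓ ≤ L := by
    intro ℓ
    exact hmono (by rw [Fin.le_def]; simp; omega)
  have hL1 : 1 ≤ L := hlam _
  -- dL is attained
  have hdne : {y | ∃ c ∈ C, c ≠ 0 ∧ y = wL n lam c}.Nonempty := ⟨_, x, hxC, hx0, rfl⟩
  obtain ⟨c₀, hc₀C, hc₀0, hc₀d⟩ : dL n lam C ∈ {y | ∃ c ∈ C, c ≠ 0 ∧ y = wL n lam c} :=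
    Nat.sInf_mem hdne
  have hd1 : 1 ≤ dL n lam C := hc₀d ▸ wL_pos n lam hlam c₀ hc₀0
  -- tL is attained
  have htne : {y | ∃ c ∈ C, c ≠ 0 ∧ y = tau n lam c}.Nonempty := ⟨_, x, hxC, hx0, rfl⟩
  obtain ⟨c₁, hc₁C, hc₁0, hc₁t⟩ : tL n lam C ∈ {y | ∃ c ∈ C, c ≠ 0 ∧ y = tau n lam c} :=
    Nat.sInf_mem htne
  constructor
  · -- lower bound
    have hane : {y | ∃ r, y = max (wL n lam r) (wL n lam (c₁ - r))}.Nonempty := ⟨_, 0, rfl⟩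
    obtain ⟨r, hr⟩ : tauAux n lam c₁ ∈ {y | ∃ r, y = max (wL n lam r) (wL n lam (c₁ - r))} :=
      Nat.sInf_mem hane
    have h1 : wL n lam c₁ ≤ wL n lam r + wL n lam (c₁ - r) := wL_le_split n lam c₁ r
    have h2 : dL n lam C ≤ wL n lam c₁ := Nat.sInf_le ⟨c₁, hc₁C, hc₁0, rfl⟩
    have h3 : tL n lam C = tauAux n lam c₁ - 1 := hc₁t
    have h4 : wL n lam r ≤ tauAux n lam c₁ := hr ▸ le_max_left _ _
    have h5 : wL n lam (c₁ - r) ≤ tauAux n lam c₁ := hr ▸ le_max_right _ _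
    omega
  · -- upper bound
    set T : ℕ := (dL n lam C + L) / 2 with hTdef
    have hTaux : tauAux n lam c₀ ≤ T := by
      by_cases hcmp : wL n lam c₀ ≤ T
      · refine le_trans (Nat.sInf_le ⟨c₀, rfl⟩) ?_
        rw [sub_self, wL_zero]
        simpa using hcmp
      · obtain ⟨r, hr1, hr2⟩ :=
          split_lemma n lam L hlam hLmax hL1 (wL n lam c₀) c₀ le_rfl T
        refine le_trans (Nat.sInf_le ⟨r, rfl⟩) ?_
        have hmin : min T (wL n lam c₀) = T := by omega
        rw [hmin] at hr2
        have h2T : dL n lam C + L - 1 ≤ 2 * T := by omega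
        rw [← hc₀d] at hr2
        exact max_le hr1 (by omega)
    have h6 : tL n lam C ≤ tau n lam c₀ := Nat.sInf_le ⟨c₀, hc₀C, hc₀0, rfl⟩
    have h7 : tau n lam c₀ = tauAux n lam c₀ - 1 := rfl
    omega
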